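/- Let p ≥ 2, K ≥ 1 be integers, θ* ∈ W* and k ∈ ℕ₊. For any sequence s = (θ₁,...,θ_k) ∈ W^{∘k} (meaning diff(θ_{i-1}, θ_i) ≥ p/4 for all i ∈ [k], with θ₀ := 𝟏), the value f_{θ*}(s) = (∏_{i∈[k]} g(diff(θ_{i-1}, θ_i))) · g(diff(θ_k, θ*)) satisfies 0 < f_{θ*}(s) ≤ (25/32)^{k + [diff(θ_k, θ*) ≥ p/4]}. -/

import Mathlib

/-- Hamming distance on `{-1,1}^p` (as functions `Fin p → ℤ`). -/
def hamDiff (p : ℕ) (a b : Fin p → ℤ) : ℕ :=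
  (Finset.univ.filter fun i => a i ≠ b i).card

/-- `g(x) = 1 - x/p + x(x-1)/(2p²)`. -/
noncomputable def gFun (p : ℕ) (x : ℝ) : ℝ :=
  1 - x / p + x * (x - 1) / (2 * (p : ℝ) ^ 2)

lemma hamDiff_le (p : ℕ) (a b : Fin p → ℤ) : hamDiff p a b ≤ p := by
  simpa [hamDiff] using (Finset.card_filter_le Finset.univ fun i => a i ≠ b i)

lemma gFun_eq (p : ℕ) (hp : 2 ≤ p) (x : ℝ) :
    gFun p x = (2 * (p : ℝ) ^ 2 - 2 * p * x + x * (x - 1)) / (2 * (p : ℝ) ^ 2) := by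
  have hppos : (0 : ℝ) < p := by
    have : (2 : ℝ) ≤ p := by exact_mod_cast hp
    linarith
  rw [gFun]
  field_simp

lemma gFun_pos (p : ℕ) (hp : 2 ≤ p) (x : ℝ) (hx0 : 0 ≤ x) (hxp : x ≤ p) :
    0 < gFun p x := by
  have hp2 : (2 : ℝ) ≤ p := by exact_mod_cast hp
  rw [gFun_eq p hp]
  apply div_pos _ (by positivity)
  nlinarith [sq_nonneg ((p : ℝ) - x)]

lemma gFun_le_one (p : ℕ) (hp : 2 ≤ p) (x : ℝ) (hx0 : 0 ≤ x) (hxp : x ≤ p) :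
    gFun p x ≤ 1 := by
  have hp2 : (2 : ℝ) ≤ p := by exact_mod_cast hp
  rw [gFun_eq p hp, div_le_one (by positivity)]
  nlinarith

lemma gFun_le (p : ℕ) (hp : 2 ≤ p) (x : ℝ) (hx0 : 0 ≤ x) (hxp : x ≤ p)
    (hx : (p : ℝ) / 4 ≤ x) : gFun p x ≤ 25 / 32 := by
  have hp2 : (2 : ℝ) ≤ p := by exact_mod_cast hp
  rw [gFun_eq p hp, div_le_iff₀ (by positivity)]
  nlinarith [mul_nonneg (by linarith : (0:ℝ) ≤ x - p/4) (by linarith : (0:ℝ) ≤ 7*p/4 - x)]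

/-- Bounds on the abstract-game value `f_{θ*}(s)` for a sequence `s ∈ W^{∘k}`:
`0 < f_{θ*}(s) ≤ (25/32)^(k + [diff(θ_k, θ*) ≥ p/4])`. -/
theorem f_bounds (p K k : ℕ) (hp : 2 ≤ p) (hK : 1 ≤ K) (hk : 1 ≤ k)
    (θ : ℕ → Fin p → ℤ)
    (hθ0 : θ 0 = fun _ => 1)
    (hθpm : ∀ i ∈ Finset.Icc 1 k, ∀ j, θ i j = 1 ∨ θ i j = -1)
    (θs : Fin p → ℤ) (hθs : ∀ j, θs j = 1 ∨ θs j = -1)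
    (hθs_lo : (p : ℝ) / 4 ≤ (hamDiff p (fun _ => 1) θs : ℝ))
    (hθs_hi : ((hamDiff p (fun _ => 1) θs : ℝ)) ≤ 3 * (p : ℝ) / 4)
    (hfar : ∀ i ∈ Finset.Icc 1 k, (p : ℝ) / 4 ≤ (hamDiff p (θ (i - 1)) (θ i) : ℝ)) :
    0 < (∏ i ∈ Finset.Icc 1 k, gFun p (hamDiff p (θ (i - 1)) (θ i)))
          * gFun p (hamDiff p (θ k) θs)
    ∧ (∏ i ∈ Finset.Icc 1 k, gFun p (hamDiff p (θ (i - 1)) (θ i)))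
          * gFun p (hamDiff p (θ k) θs)
        ≤ (25 / 32 : ℝ)
            ^ (k + if (p : ℝ) / 4 ≤ (hamDiff p (θ k) θs : ℝ) then 1 else 0) := by
  have hbd : ∀ a b : Fin p → ℤ, ((hamDiff p a b : ℝ)) ≤ p := by
    intro a b; exact_mod_cast hamDiff_le p a b
  have hnn : ∀ a b : Fin p → ℤ, (0 : ℝ) ≤ (hamDiff p a b : ℝ) := fun a b => by positivity
  have hprod_pos : 0 < ∏ i ∈ Finset.Icc 1 k, gFun p (hamDiff p (θ (i - 1)) (θ i)) :=
    Finset.prod_pos fun i hi => gFun_pos p hp _ (hnn _ _) (hbd _ _)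
  have hlast_pos : 0 < gFun p (hamDiff p (θ k) θs) :=
    gFun_pos p hp _ (hnn _ _) (hbd _ _)
  have hprod_le : (∏ i ∈ Finset.Icc 1 k, gFun p (hamDiff p (θ (i - 1)) (θ i)))
      ≤ (25 / 32 : ℝ) ^ k := by
    calc (∏ i ∈ Finset.Icc 1 k, gFun p (hamDiff p (θ (i - 1)) (θ i)))
        ≤ ∏ _i ∈ Finset.Icc 1 k, (25 / 32 : ℝ) := by
          apply Finset.prod_le_prod
          · intro i hi; exact le_of_lt (gFun_pos p hp _ (hnn _ _) (hbd _ _))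
          · intro i hi; exact gFun_le p hp _ (hnn _ _) (hbd _ _) (hfar i hi)
      _ = (25 / 32 : ℝ) ^ k := by simp [Finset.prod_const, Nat.card_Icc, div_pow]
  constructor
  · exact mul_pos hprod_pos hlast_pos
  · by_cases h : (p : ℝ) / 4 ≤ (hamDiff p (θ k) θs : ℝ)
    · rw [if_pos h, pow_succ]
      exact mul_le_mul hprod_le (gFun_le p hp _ (hnn _ _) (hbd _ _) h)
        (le_of_lt hlast_pos) (by positivity)
    · rw [if_neg h, Nat.add_zero]
      calc (∏ i ∈ Finset.Icc 1 k, gFun p (hamDiff p (θ (i - 1)) (θ i)))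
            * gFun p (hamDiff p (θ k) θs)
          ≤ (25 / 32 : ℝ) ^ k * 1 :=
            mul_le_mul hprod_le (gFun_le_one p hp _ (hnn _ _) (hbd _ _))
              (le_of_lt hlast_pos) (by positivity)
        _ = (25 / 32 : ℝ) ^ k := by ring
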